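/- arXiv:1804.09821 — 2 statements merged into one kernel-verified Lean document; each statement's English description precedes it below -/
import Mathlib

section
/- Fix u ∈ ℂ with 0 < |u| < 1 and set q = u^{24}, p = u^{12}. Define θ(x) = ∑_{m∈ℤ} p^{m²} x^m, Π(z) = u³ (z − z^{-1}) ∏_{n=1}^∞ (1 − z²qⁿ)(1 − qⁿ)(1 − z^{-2}qⁿ), and η = u ∏_{n=1}^∞ (1 − qⁿ). Then the function f(z,w) = (θ(zw) − θ(zw^{-1}))/(Π(z)Π(w)), defined on the set where Π(z)Π(w) ≠ 0, tends to (∑_{m∈ℤ} m² p^{m²}) / (2 η⁶) as (z,w) → (1,1) within that set. -/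
/-- The Jacobi theta function of the lattice `ℤ`: `θ_p(x) = ∑_{m ∈ ℤ} p^(m²) x^m`,
where `p = q^(1/2)`. -/
noncomputable def jacobiThetaZ (p x : ℂ) : ℂ := ∑' m : ℤ, p ^ (m ^ 2) * x ^ m

/-- The Weyl denominator
`Π(z) = q^(1/8) (z - z⁻¹) ∏_{n ≥ 1} (1 - z²qⁿ)(1 - qⁿ)(1 - z⁻²qⁿ)`, with `q = u²⁴`,
`q^(1/8) = u³`. -/
noncomputable def weylPi (u z : ℂ) : ℂ :=
  u ^ 3 * (z - z⁻¹) *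
    ∏' n : ℕ, ((1 - z ^ 2 * (u ^ 24) ^ (n + 1)) * (1 - (u ^ 24) ^ (n + 1)) *
      (1 - (z ^ 2)⁻¹ * (u ^ 24) ^ (n + 1)))

/-- The Dedekind eta function `η = q^(1/24) ∏_{n ≥ 1} (1 - qⁿ)`, with `q = u²⁴`,
`q^(1/24) = u`. -/
noncomputable def dedekindEta (u : ℂ) : ℂ := u * ∏' n : ℕ, (1 - (u ^ 24) ^ (n + 1))

/-- The supercharacter of a pair of `bc`-ghosts:
`S(z) = q^(1/12) ∏_{n ≥ 1} (1 - z²qⁿ)(1 - z⁻²q^(n-1))`, with `q = u²⁴`, `q^(1/12) = u²`. -/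
noncomputable def ghostSch (u z : ℂ) : ℂ :=
  u ^ 2 * ∏' n : ℕ, ((1 - z ^ 2 * (u ^ 24) ^ (n + 1)) * (1 - (z ^ 2)⁻¹ * (u ^ 24) ^ n))


open Complex Filter

noncomputable def Spoly (M : ℕ) (z : ℂ) : ℂ := ∑ j ∈ Finset.range M, z ^ ((M : ℤ) - 1 - 2 * j)
noncomputable def qProd (q a : ℂ) : ℂ := ∏' n : ℕ, (1 - a * q ^ (n + 1))
noncomputable def Gfun (p : ℂ) (x : ℂ × ℂ) : ℂ :=
  ∑' m : ℕ, p ^ ((m + 1) ^ 2) * (Spoly (m + 1) x.1 * Spoly (m + 1) x.2)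

lemma sumGeomAux : Summable (fun m : ℕ => ((m : ℝ) + 1) ^ 2 * (1/2) ^ m) := by
  have h2 := summable_pow_mul_geometric_of_norm_lt_one (R := ℝ) 2 (r := 1/2) (by norm_num)
  have h1 := summable_pow_mul_geometric_of_norm_lt_one (R := ℝ) 1 (r := 1/2) (by norm_num)
  have h0 := summable_pow_mul_geometric_of_norm_lt_one (R := ℝ) 0 (r := 1/2) (by norm_num)
  apply ((h2.add (h1.mul_left 2)).add h0).congr
  intro n; push_cast; ring

/-- Core summability: `(n+1)^2 * c^n * r^(n^2)` is summable for `0 ≤ r < 1`, `0 ≤ c`. -/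
lemma sumA {r c : ℝ} (hr0 : 0 ≤ r) (hr : r < 1) (hc : 0 ≤ c) :
    Summable (fun n : ℕ => ((n : ℝ) + 1) ^ 2 * c ^ n * r ^ (n ^ 2)) := by
  rcases eq_or_lt_of_le hr0 with h0 | hrpos
  · apply summable_of_ne_finset_zero (s := {0})
    intro n hn
    simp only [Finset.mem_singleton] at hn
    rw [← h0, zero_pow (by positivity), mul_zero]
  · have hhalf : Tendsto (fun n : ℕ => c * r ^ n) atTop (nhds 0) := by
      simpa using (tendsto_pow_atTop_nhds_zero_of_lt_one hr0 hr).const_mul c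
    obtain ⟨N, hN⟩ :=
      (hhalf.eventually (eventually_le_nhds (by norm_num : (0:ℝ) < 1/2))).exists_forall_of_atTop
    have key : ∀ m : ℕ, N ≤ m → c ^ m * r ^ (m ^ 2) ≤ (1/2) ^ m := by
      intro m hm
      have h1 : c ^ m * r ^ (m ^ 2) = (c * r ^ m) ^ m := by
        rw [sq, pow_mul, mul_pow]
      rw [h1]
      exact pow_le_pow_left₀ (by positivity) (hN m hm) m
    rw [← summable_nat_add_iff N]
    have hg : Summable (fun n : ℕ => (((n + N : ℕ) : ℝ) + 1) ^ 2 * (1/2) ^ (n + N)) :=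
      (summable_nat_add_iff N).2 sumGeomAux
    apply hg.of_nonneg_of_le (fun n => by positivity)
    intro n
    rw [mul_assoc]
    exact mul_le_mul_of_nonneg_left (key (n + N) (Nat.le_add_left _ _)) (by positivity)

lemma Spoly_mul {z : ℂ} (hz : z ≠ 0) (M : ℕ) :
    (z - z⁻¹) * Spoly M z = z ^ (M : ℤ) - z ^ (-(M : ℤ)) := by
  have key : ∀ j : ℕ, (z - z⁻¹) * z ^ ((M : ℤ) - 1 - 2 * j)
      = z ^ ((M : ℤ) - 2 * j) - z ^ ((M : ℤ) - 2 * (j + 1)) := by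
    intro j
    rw [sub_mul]
    congr 1
    · rw [show (M : ℤ) - 2 * (j : ℤ) = 1 + ((M : ℤ) - 1 - 2 * j) by ring, zpow_add₀ hz,
        zpow_one]
    · rw [show (M : ℤ) - 2 * ((j : ℤ) + 1) = (-1) + ((M : ℤ) - 1 - 2 * j) by ring,
        zpow_add₀ hz, zpow_neg_one]
  rw [Spoly, Finset.mul_sum]
  calc ∑ j ∈ Finset.range M, (z - z⁻¹) * z ^ ((M : ℤ) - 1 - 2 * j)
      = ∑ j ∈ Finset.range M,
        ((fun j : ℕ => z ^ ((M : ℤ) - 2 * j)) j - (fun j : ℕ => z ^ ((M : ℤ) - 2 * j)) (j + 1)) := by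
        refine Finset.sum_congr rfl fun j _ => ?_
        simpa using key j
    _ = z ^ ((M : ℤ) - 2 * (0 : ℕ)) - z ^ ((M : ℤ) - 2 * M) := Finset.sum_range_sub' _ M
    _ = z ^ (M : ℤ) - z ^ (-(M : ℤ)) := by
        have e1 : (M : ℤ) - 2 * ((0 : ℕ) : ℤ) = (M : ℤ) := by push_cast; ring
        have e2 : (M : ℤ) - 2 * ((M : ℕ) : ℤ) = -(M : ℤ) := by push_cast; ring
        rw [e1, e2]

lemma Spoly_one (M : ℕ) : Spoly M 1 = M := by simp [Spoly]

lemma zpow_le_aux {x : ℝ} (h1 : 1/2 ≤ x) (h2 : x ≤ 2) {e : ℤ} {m : ℕ} (he : e.natAbs ≤ m) :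
    x ^ e ≤ 2 ^ m := by
  have hx0 : (0:ℝ) < x := lt_of_lt_of_le (by norm_num) h1
  rcases le_or_gt 0 e with h | h
  · lift e to ℕ using h
    rw [zpow_natCast]
    calc x ^ e ≤ 2 ^ e := pow_le_pow_left₀ hx0.le h2 e
      _ ≤ 2 ^ m := pow_le_pow_right₀ one_le_two (by simpa using he)
  · have he' : e = -(e.natAbs : ℤ) := by omega
    rw [he', zpow_neg, zpow_natCast, ← inv_pow]
    have hxi : x⁻¹ ≤ 2 := by
      rw [inv_le_comm₀ hx0 (by norm_num)]; linarith
    calc x⁻¹ ^ e.natAbs ≤ 2 ^ e.natAbs := pow_le_pow_left₀ (by positivity) hxi _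
      _ ≤ 2 ^ m := pow_le_pow_right₀ one_le_two he

lemma Spoly_norm_le {z : ℂ} (h1 : 1/2 ≤ ‖z‖) (h2 : ‖z‖ ≤ 2) (m : ℕ) :
    ‖Spoly (m + 1) z‖ ≤ ((m : ℝ) + 1) * 2 ^ m := by
  calc ‖Spoly (m+1) z‖ ≤ ∑ j ∈ Finset.range (m+1), ‖z ^ (((m+1 : ℕ) : ℤ) - 1 - 2 * j)‖ :=
        norm_sum_le _ _
    _ ≤ ∑ _j ∈ Finset.range (m+1), (2:ℝ) ^ m := by
        refine Finset.sum_le_sum fun j hj => ?_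
        rw [norm_zpow]
        refine zpow_le_aux h1 h2 ?_
        have hj' : j ≤ m := by simpa [Nat.lt_succ_iff] using hj
        omega
    _ = ((m : ℝ) + 1) * 2 ^ m := by
        rw [Finset.sum_const, Finset.card_range]; push_cast; ring

lemma Spoly_continuousOn (M : ℕ) : ContinuousOn (Spoly M) {z : ℂ | z ≠ 0} := by
  apply continuousOn_finset_sum
  intro j _
  intro z hz
  exact (continuousAt_zpow₀ z _ (Or.inl hz)).continuousWithinAt

section qProd
variable {q : ℂ} (hq : ‖q‖ < 1)

lemma r_gt_one (hq : ‖q‖ < 1) : 1 < 2 / (1 + ‖q‖) := by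
  rw [lt_div_iff₀ (by positivity)]; linarith

lemma s_lt_one (hq : ‖q‖ < 1) : 2 / (1 + ‖q‖) * ‖q‖ < 1 := by
  rw [div_mul_eq_mul_div, div_lt_one (by positivity)]; linarith

lemma qfac_norm_le (hq : ‖q‖ < 1) {a : ℂ} (ha : ‖a‖ ≤ 2 / (1 + ‖q‖)) (n : ℕ) :
    ‖a * q ^ (n + 1)‖ ≤ 2 / (1 + ‖q‖) * ‖q‖ ^ (n + 1) := by
  rw [norm_mul, norm_pow]
  exact mul_le_mul_of_nonneg_right ha (by positivity)

lemma qfac_norm_lt_one (hq : ‖q‖ < 1) {a : ℂ} (ha : ‖a‖ ≤ 2 / (1 + ‖q‖)) (n : ℕ) :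
    ‖a * q ^ (n + 1)‖ < 1 := by
  refine lt_of_le_of_lt (le_trans (qfac_norm_le hq ha n) ?_) (s_lt_one hq)
  have : ‖q‖ ^ (n + 1) ≤ ‖q‖ ^ 1 := pow_le_pow_of_le_one (norm_nonneg q) hq.le (by omega)
  simp only [pow_one] at this
  exact mul_le_mul_of_nonneg_left this (by positivity)

lemma qfac_ne_zero (hq : ‖q‖ < 1) {a : ℂ} (ha : ‖a‖ ≤ 2 / (1 + ‖q‖)) (n : ℕ) :
    1 - a * q ^ (n + 1) ≠ 0 := by
  intro h
  have h1 : a * q ^ (n + 1) = 1 := by linear_combination -h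
  have := qfac_norm_lt_one hq ha n
  rw [h1] at this; simp at this

lemma qfac_slitPlane (hq : ‖q‖ < 1) {a : ℂ} (ha : ‖a‖ ≤ 2 / (1 + ‖q‖)) (n : ℕ) :
    1 - a * q ^ (n + 1) ∈ Complex.slitPlane := by
  rw [sub_eq_add_neg]
  exact mem_slitPlane_of_norm_lt_one (by simpa using qfac_norm_lt_one hq ha n)

lemma qlog_norm_le (hq : ‖q‖ < 1) {a : ℂ} (ha : ‖a‖ ≤ 2 / (1 + ‖q‖)) (n : ℕ) :
    ‖Complex.log (1 - a * q ^ (n + 1))‖ ≤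
      (2 / (1 + ‖q‖)) ^ 2 * (1 - 2 / (1 + ‖q‖) * ‖q‖)⁻¹ / 2 * ((‖q‖ ^ 2) ^ (n + 1)) +
        2 / (1 + ‖q‖) * ‖q‖ ^ (n + 1) := by
  set t := ‖a * q ^ (n + 1)‖ with ht
  have htlt : t < 1 := qfac_norm_lt_one hq ha n
  have hTn : t ≤ 2 / (1 + ‖q‖) * ‖q‖ ^ (n + 1) := qfac_norm_le hq ha n
  have hs1 : 2 / (1 + ‖q‖) * ‖q‖ < 1 := s_lt_one hq
  have hb := Complex.norm_log_one_add_le (z := -(a * q ^ (n + 1)))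
    (by rw [norm_neg, ← ht]; exact htlt)
  rw [show (1 : ℂ) + -(a * q ^ (n + 1)) = 1 - a * q ^ (n + 1) by ring] at hb
  simp only [norm_neg, ← ht] at hb
  refine le_trans hb (add_le_add ?_ hTn)
  have hts : t ≤ 2 / (1 + ‖q‖) * ‖q‖ := by
    refine le_trans hTn ?_
    have : ‖q‖ ^ (n + 1) ≤ ‖q‖ ^ 1 := pow_le_pow_of_le_one (norm_nonneg q) hq.le (by omega)
    simpa using mul_le_mul_of_nonneg_left this (by positivity)
  have h1t : (1 - t)⁻¹ ≤ (1 - 2 / (1 + ‖q‖) * ‖q‖)⁻¹ :=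
    inv_anti₀ (by linarith) (by linarith)
  have ht0 : 0 ≤ t := norm_nonneg _
  have hT2 : t ^ 2 ≤ (2 / (1 + ‖q‖) * ‖q‖ ^ (n + 1)) ^ 2 := pow_le_pow_left₀ ht0 hTn 2
  have hinv0 : 0 ≤ (1 - t)⁻¹ := inv_nonneg.2 (by linarith)
  have hmain : t ^ 2 * (1 - t)⁻¹ ≤
      (2 / (1 + ‖q‖) * ‖q‖ ^ (n + 1)) ^ 2 * (1 - 2 / (1 + ‖q‖) * ‖q‖)⁻¹ :=
    mul_le_mul hT2 h1t hinv0 (by positivity)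
  calc t ^ 2 * (1 - t)⁻¹ / 2
      ≤ (2 / (1 + ‖q‖) * ‖q‖ ^ (n + 1)) ^ 2 * (1 - 2 / (1 + ‖q‖) * ‖q‖)⁻¹ / 2 := by linarith
    _ = (2 / (1 + ‖q‖)) ^ 2 * (1 - 2 / (1 + ‖q‖) * ‖q‖)⁻¹ / 2 * ((‖q‖ ^ 2) ^ (n + 1)) := by
        ring

lemma geom_shift_summable (x c : ℝ) (hx0 : 0 ≤ x) (hx1 : x < 1) :
    Summable (fun n : ℕ => c * x ^ (n + 1)) := by
  apply ((summable_geometric_of_lt_one hx0 hx1).mul_left (c * x)).congr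
  intro n; ring

lemma qlog_bound_summable (hq : ‖q‖ < 1) :
    Summable (fun n : ℕ =>
      (2 / (1 + ‖q‖)) ^ 2 * (1 - 2 / (1 + ‖q‖) * ‖q‖)⁻¹ / 2 * ((‖q‖ ^ 2) ^ (n + 1)) +
        2 / (1 + ‖q‖) * ‖q‖ ^ (n + 1)) := by
  apply Summable.add
  · exact geom_shift_summable _ _ (by positivity) (by nlinarith [norm_nonneg q])
  · exact geom_shift_summable _ _ (norm_nonneg q) hq

lemma qlog_summable (hq : ‖q‖ < 1) {a : ℂ} (ha : ‖a‖ ≤ 2 / (1 + ‖q‖)) :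
    Summable (fun n : ℕ => Complex.log (1 - a * q ^ (n + 1))) :=
  (qlog_bound_summable hq).of_norm_bounded (qlog_norm_le hq ha)

end qProd

section qProd2
variable {q : ℂ}

lemma qProd_eq_exp (hq : ‖q‖ < 1) {a : ℂ} (ha : ‖a‖ ≤ 2 / (1 + ‖q‖)) :
    qProd q a = Complex.exp (∑' n : ℕ, Complex.log (1 - a * q ^ (n + 1))) := by
  exact (Complex.cexp_tsum_eq_tprod (fun n => qfac_ne_zero hq ha n) (qlog_summable hq ha)).symm

lemma qProd_ne_zero (hq : ‖q‖ < 1) {a : ℂ} (ha : ‖a‖ ≤ 2 / (1 + ‖q‖)) : qProd q a ≠ 0 := by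
  rw [qProd_eq_exp hq ha]; exact Complex.exp_ne_zero _

lemma qProd_multipliable (hq : ‖q‖ < 1) {a : ℂ} (ha : ‖a‖ ≤ 2 / (1 + ‖q‖)) :
    Multipliable (fun n : ℕ => 1 - a * q ^ (n + 1)) :=
  Complex.multipliable_of_summable_log (qlog_summable hq ha)

lemma qProd_continuousOn (hq : ‖q‖ < 1) :
    ContinuousOn (qProd q) {x : ℂ | ‖x‖ ≤ 2 / (1 + ‖q‖)} := by
  rw [continuousOn_iff_continuous_restrict]
  have heq : (Complex.exp ∘ fun x : {x : ℂ // ‖x‖ ≤ 2 / (1 + ‖q‖)} =>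
      ∑' n : ℕ, Complex.log (1 - x.1 * q ^ (n + 1))) = fun x => ∏' n : ℕ, (1 - x.1 * q ^ (n + 1)) :=
    funext fun x => Complex.cexp_tsum_eq_tprod (fun n => qfac_ne_zero hq x.2 n) (qlog_summable hq x.2)
  have : Set.domRestrict {x : ℂ | ‖x‖ ≤ 2 / (1 + ‖q‖)} (qProd q)
      = fun x : {x : ℂ // ‖x‖ ≤ 2 / (1 + ‖q‖)} => ∏' n : ℕ, (1 - x.1 * q ^ (n + 1)) := rfl
  rw [this, ← heq]
  apply Complex.continuous_exp.comp
  apply continuous_tsum (u := fun n =>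
      (2 / (1 + ‖q‖)) ^ 2 * (1 - 2 / (1 + ‖q‖) * ‖q‖)⁻¹ / 2 * ((‖q‖ ^ 2) ^ (n + 1)) +
        2 / (1 + ‖q‖) * ‖q‖ ^ (n + 1))
  · intro n
    exact Continuous.clog (continuous_const.sub (continuous_subtype_val.mul continuous_const))
      (fun x => qfac_slitPlane hq x.2 n)
  · exact qlog_bound_summable hq
  · intro n x; exact qlog_norm_le hq x.2 n

lemma qProd_continuousAt (hq : ‖q‖ < 1) {b : ℂ} (hb : ‖b‖ < 2 / (1 + ‖q‖)) :
    ContinuousAt (qProd q) b := by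
  apply ContinuousOn.continuousAt (qProd_continuousOn hq)
  have : {x : ℂ | ‖x‖ ≤ 2 / (1 + ‖q‖)} = Metric.closedBall (0 : ℂ) (2 / (1 + ‖q‖)) := by
    ext x; simp [Metric.mem_closedBall, dist_zero_right]
  rw [this]
  exact Metric.closedBall_mem_nhds_of_mem (by simpa [Metric.mem_ball, dist_zero_right] using hb)

lemma mult_one_sub_q (hq : ‖q‖ < 1) : Multipliable (fun n : ℕ => 1 - q ^ (n + 1)) := by
  apply (qProd_multipliable hq (a := 1) (by simpa using (r_gt_one hq).le)).congr
  intro n; rw [one_mul]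

lemma qProd_one_eq (hq : ‖q‖ < 1) : qProd q 1 = ∏' n : ℕ, (1 - q ^ (n + 1)) :=
  tprod_congr (fun n => by rw [one_mul])

lemma triple_tprod_eq (hq : ‖q‖ < 1) {z : ℂ} (h2 : ‖z ^ 2‖ ≤ 2 / (1 + ‖q‖))
    (h2i : ‖(z ^ 2)⁻¹‖ ≤ 2 / (1 + ‖q‖)) :
    (∏' n : ℕ, ((1 - z ^ 2 * q ^ (n + 1)) * (1 - q ^ (n + 1)) * (1 - (z ^ 2)⁻¹ * q ^ (n + 1))))
      = qProd q (z ^ 2) * qProd q 1 * qProd q ((z ^ 2)⁻¹) := by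
  rw [Multipliable.tprod_mul ((qProd_multipliable hq h2).mul (mult_one_sub_q hq)) (qProd_multipliable hq h2i),
    Multipliable.tprod_mul (qProd_multipliable hq h2) (mult_one_sub_q hq), qProd_one_eq hq]
  rfl

lemma sumMaster {P : ℝ} (hP0 : 0 ≤ P) (hP : P < 1) {g : ℕ → ℂ}
    (hg : ∀ n, ‖g n‖ ≤ 4 * (((n : ℝ) + 1) ^ 2 * 16 ^ n * P ^ (n ^ 2))) : Summable g :=
  Summable.of_norm_bounded ((sumA hP0 hP (by norm_num)).mul_left 4) hg

lemma powp_le {P : ℝ} (hP0 : 0 ≤ P) (hP1 : P ≤ 1) (n : ℕ) :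
    P ^ ((n + 1) ^ 2) ≤ P ^ (n ^ 2) :=
  pow_le_pow_of_le_one hP0 hP1 (Nat.pow_le_pow_left (Nat.le_succ n) 2)

lemma bound_aux {P : ℝ} (hP0 : 0 ≤ P) (n : ℕ) {A : ℝ} (hA0 : 0 ≤ A) (hA : A ≤ 4 * 4 ^ n) :
    P ^ (n ^ 2) * A ≤ 4 * (((n : ℝ) + 1) ^ 2 * 16 ^ n * P ^ (n ^ 2)) := by
  have h1 : P ^ (n ^ 2) * A ≤ P ^ (n ^ 2) * (4 * 4 ^ n) :=
    mul_le_mul_of_nonneg_left hA (by positivity)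
  have h2 : (4 : ℝ) ^ n ≤ 16 ^ n := pow_le_pow_left₀ (by norm_num) (by norm_num) n
  have h3 : (1 : ℝ) ≤ ((n : ℝ) + 1) ^ 2 := by nlinarith [Nat.cast_nonneg (α := ℝ) n]
  have h4 : P ^ (n ^ 2) * 4 ^ n ≤ P ^ (n ^ 2) * 16 ^ n :=
    mul_le_mul_of_nonneg_left h2 (by positivity)
  nlinarith [mul_nonneg (pow_nonneg hP0 (n ^ 2)) (pow_nonneg (show (0:ℝ) ≤ 16 by norm_num) n)]

lemma theta_summable {p : ℂ} (hp : ‖p‖ < 1) {x : ℂ} (hx : ‖x‖ ≤ 4) (hxi : ‖x⁻¹‖ ≤ 4) :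
    Summable (fun m : ℤ => p ^ (m ^ 2) * x ^ m) := by
  apply Summable.of_nat_of_neg_add_one
  · apply sumMaster (norm_nonneg p) hp
    intro n
    have e1 : ((n : ℤ) ^ 2) = ((n ^ 2 : ℕ) : ℤ) := by push_cast; ring
    rw [e1, zpow_natCast, zpow_natCast, norm_mul, norm_pow, norm_pow]
    exact bound_aux (norm_nonneg p) n (by positivity)
      (le_trans (pow_le_pow_left₀ (norm_nonneg x) hx n)
        (by nlinarith [pow_nonneg (show (0:ℝ) ≤ 4 by norm_num) n]))
  · apply sumMaster (norm_nonneg p) hp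
    intro n
    have e1 : ((-((n : ℤ) + 1)) ^ 2) = (((n + 1) ^ 2 : ℕ) : ℤ) := by push_cast; ring
    have e2 : x ^ (-((n : ℤ) + 1)) = (x⁻¹) ^ (n + 1) := by
      rw [show -((n : ℤ) + 1) = -(((n + 1 : ℕ) : ℤ)) by push_cast; ring, zpow_neg,
        zpow_natCast, inv_pow]
    rw [e1, e2, zpow_natCast, norm_mul, norm_pow, norm_pow]
    calc ‖p‖ ^ ((n + 1) ^ 2) * ‖x⁻¹‖ ^ (n + 1)
        ≤ ‖p‖ ^ (n ^ 2) * ‖x⁻¹‖ ^ (n + 1) :=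
          mul_le_mul_of_nonneg_right (powp_le (norm_nonneg p) hp.le n) (by positivity)
      _ ≤ 4 * (((n : ℝ) + 1) ^ 2 * 16 ^ n * ‖p‖ ^ (n ^ 2)) := by
          refine bound_aux (norm_nonneg p) n (by positivity) ?_
          calc ‖x⁻¹‖ ^ (n + 1) ≤ 4 ^ (n + 1) := pow_le_pow_left₀ (norm_nonneg _) hxi _
            _ = 4 * 4 ^ n := by ring

lemma norm_inv_le_two {z : ℂ} (h1 : 1/2 ≤ ‖z‖) : ‖z⁻¹‖ ≤ 2 := by
  rw [norm_inv, inv_le_comm₀ (by linarith) (by norm_num)]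
  linarith

lemma theta_diff {p : ℂ} (hp : ‖p‖ < 1) {z w : ℂ}
    (hz1 : 1/2 ≤ ‖z‖) (hz2 : ‖z‖ ≤ 2) (hw1 : 1/2 ≤ ‖w‖) (hw2 : ‖w‖ ≤ 2) :
    jacobiThetaZ p (z * w) - jacobiThetaZ p (z * w⁻¹)
      = (z - z⁻¹) * (w - w⁻¹) *
        ∑' m : ℕ, p ^ ((m + 1) ^ 2) * (Spoly (m + 1) z * Spoly (m + 1) w) := by
  have hz0 : z ≠ 0 := by intro h; rw [h] at hz1; simp at hz1; linarith
  have hw0 : w ≠ 0 := by intro h; rw [h] at hw1; simp at hw1; linarith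
  have hzi : ‖z⁻¹‖ ≤ 2 := norm_inv_le_two hz1
  have hwi : ‖w⁻¹‖ ≤ 2 := norm_inv_le_two hw1
  have hx1 : ‖z * w‖ ≤ 4 := by rw [norm_mul]; nlinarith
  have hx1i : ‖(z * w)⁻¹‖ ≤ 4 := by rw [mul_inv, norm_mul]; nlinarith [norm_nonneg z⁻¹]
  have hx2 : ‖z * w⁻¹‖ ≤ 4 := by rw [norm_mul]; nlinarith [norm_nonneg z]
  have hx2i : ‖(z * w⁻¹)⁻¹‖ ≤ 4 := by
    rw [mul_inv, inv_inv, norm_mul]; nlinarith [norm_nonneg z⁻¹]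
  have S1 := theta_summable hp hx1 hx1i
  have S2 := theta_summable hp hx2 hx2i
  have hterm : ∀ m : ℤ, p ^ (m ^ 2) * (z * w) ^ m - p ^ (m ^ 2) * (z * w⁻¹) ^ m
      = p ^ (m ^ 2) * z ^ m * (w ^ m - w ^ (-m)) := by
    intro m
    rw [mul_zpow, mul_zpow, inv_zpow, ← zpow_neg]
    ring
  set g : ℤ → ℂ := fun m => p ^ (m ^ 2) * z ^ m * (w ^ m - w ^ (-m)) with hgdef
  have Sg : Summable g := (S1.sub S2).congr hterm
  have step1 : jacobiThetaZ p (z * w) - jacobiThetaZ p (z * w⁻¹) = ∑' m : ℤ, g m := by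
    rw [jacobiThetaZ, jacobiThetaZ, ← Summable.tsum_sub S1 S2]
    exact tsum_congr hterm
  have SgN : Summable (fun n : ℕ => g n) := Sg.comp_injective fun a b h => by exact_mod_cast h
  have SgM : Summable (fun n : ℕ => g (-((n : ℤ) + 1))) :=
    Sg.comp_injective fun a b h => by
      simp only [neg_inj, add_left_inj] at h
      exact_mod_cast h
  have SgN1 : Summable (fun n : ℕ => g ((n : ℤ) + 1)) := by
    have := (summable_nat_add_iff 1).2 SgN
    apply this.congr
    intro n
    exact congrArg g (by push_cast; ring)
  have g0 : g 0 = 0 := by simp [hgdef]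
  have pair : ∀ n : ℕ, g ((n : ℤ) + 1) + g (-((n : ℤ) + 1))
      = ((z - z⁻¹) * (w - w⁻¹)) * (p ^ ((n + 1) ^ 2) * (Spoly (n + 1) z * Spoly (n + 1) w)) := by
    intro n
    have e1 : ((n : ℤ) + 1) = (((n + 1 : ℕ)) : ℤ) := by push_cast; ring
    have e2 : ((n : ℤ) + 1) ^ 2 = (((n + 1) ^ 2 : ℕ) : ℤ) := by push_cast; ring
    have e3 : (-((n : ℤ) + 1)) ^ 2 = (((n + 1) ^ 2 : ℕ) : ℤ) := by push_cast; ring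
    have hSz := Spoly_mul hz0 (n + 1)
    have hSw := Spoly_mul hw0 (n + 1)
    simp only [hgdef]
    rw [e2, e3, zpow_natCast]
    have hne : -(-((n : ℤ) + 1)) = ((n : ℤ) + 1) := by ring
    rw [hne]
    have expand : z ^ ((n : ℤ) + 1) * (w ^ ((n : ℤ) + 1) - w ^ (-((n : ℤ) + 1)))
        + z ^ (-((n : ℤ) + 1)) * (w ^ (-((n : ℤ) + 1)) - w ^ ((n : ℤ) + 1))
        = (z ^ ((n : ℤ) + 1) - z ^ (-((n : ℤ) + 1)))
          * (w ^ ((n : ℤ) + 1) - w ^ (-((n : ℤ) + 1))) := by ring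
    calc p ^ ((n + 1) ^ 2) * z ^ ((n : ℤ) + 1) * (w ^ ((n : ℤ) + 1) - w ^ (-((n : ℤ) + 1)))
          + p ^ ((n + 1) ^ 2) * z ^ (-((n : ℤ) + 1))
            * (w ^ (-((n : ℤ) + 1)) - w ^ ((n : ℤ) + 1))
        = p ^ ((n + 1) ^ 2) * ((z ^ ((n : ℤ) + 1) - z ^ (-((n : ℤ) + 1)))
            * (w ^ ((n : ℤ) + 1) - w ^ (-((n : ℤ) + 1)))) := by ring
      _ = ((z - z⁻¹) * (w - w⁻¹)) * (p ^ ((n + 1) ^ 2)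
            * (Spoly (n + 1) z * Spoly (n + 1) w)) := by
          rw [e1, ← hSz, ← hSw]
          ring
  calc jacobiThetaZ p (z * w) - jacobiThetaZ p (z * w⁻¹)
      = ∑' m : ℤ, g m := step1
    _ = (∑' n : ℕ, g n) + ∑' n : ℕ, g (-((n : ℤ) + 1)) := tsum_of_nat_of_neg_add_one SgN SgM
    _ = (∑' n : ℕ, g ((n : ℤ) + 1)) + ∑' n : ℕ, g (-((n : ℤ) + 1)) := by
        rw [Summable.tsum_eq_zero_add SgN]
        simp only [Nat.cast_zero, g0, zero_add]
        congr 1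
    _ = ∑' n : ℕ, (g ((n : ℤ) + 1) + g (-((n : ℤ) + 1))) := (Summable.tsum_add SgN1 SgM).symm
    _ = ∑' n : ℕ, ((z - z⁻¹) * (w - w⁻¹))
          * (p ^ ((n + 1) ^ 2) * (Spoly (n + 1) z * Spoly (n + 1) w)) := tsum_congr pair
    _ = (z - z⁻¹) * (w - w⁻¹)
          * ∑' m : ℕ, p ^ ((m + 1) ^ 2) * (Spoly (m + 1) z * Spoly (m + 1) w) := tsum_mul_left

lemma ball_facts {x : ℂ × ℂ} (hx : x ∈ Metric.ball ((1 : ℂ), (1 : ℂ)) (1/2)) :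
    (1/2 ≤ ‖x.1‖ ∧ ‖x.1‖ ≤ 2) ∧ (1/2 ≤ ‖x.2‖ ∧ ‖x.2‖ ≤ 2) := by
  rw [Metric.mem_ball, Prod.dist_eq, max_lt_iff] at hx
  obtain ⟨h1, h2⟩ := hx
  rw [dist_eq_norm] at h1 h2
  constructor <;> constructor
  · have := norm_sub_norm_le (1 : ℂ) x.1
    rw [norm_sub_rev] at this; simp only [norm_one] at *; linarith
  · have := norm_sub_norm_le x.1 1; simp only [norm_one] at *; linarith
  · have := norm_sub_norm_le (1 : ℂ) x.2
    rw [norm_sub_rev] at this; simp only [norm_one] at *; linarith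
  · have := norm_sub_norm_le x.2 1; simp only [norm_one] at *; linarith

lemma Gterm_norm_le {p : ℂ} (hp : ‖p‖ < 1) {x : ℂ × ℂ}
    (hx : x ∈ Metric.ball ((1 : ℂ), (1 : ℂ)) (1/2)) (m : ℕ) :
    ‖p ^ ((m + 1) ^ 2) * (Spoly (m + 1) x.1 * Spoly (m + 1) x.2)‖
      ≤ 4 * (((m : ℝ) + 1) ^ 2 * 16 ^ m * ‖p‖ ^ (m ^ 2)) := by
  obtain ⟨⟨ha1, ha2⟩, ⟨hb1, hb2⟩⟩ := ball_facts hx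
  rw [norm_mul, norm_mul, norm_pow]
  have h1 := Spoly_norm_le ha1 ha2 m
  have h2 := Spoly_norm_le hb1 hb2 m
  have hS : ‖Spoly (m+1) x.1‖ * ‖Spoly (m+1) x.2‖ ≤ (((m:ℝ)+1) * 2 ^ m) * (((m:ℝ)+1) * 2 ^ m) :=
    mul_le_mul h1 h2 (norm_nonneg _) (by positivity)
  calc ‖p‖ ^ ((m+1)^2) * (‖Spoly (m+1) x.1‖ * ‖Spoly (m+1) x.2‖)
      ≤ ‖p‖ ^ (m^2) * ((((m:ℝ)+1) * 2 ^ m) * (((m:ℝ)+1) * 2 ^ m)) := by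
        apply mul_le_mul (powp_le (norm_nonneg p) hp.le m) hS (by positivity) (by positivity)
    _ = ((m:ℝ)+1)^2 * 4 ^ m * ‖p‖ ^ (m^2) := by
        have h4 : (4:ℝ)^m = 2^m * 2^m := by rw [← mul_pow]; norm_num
        rw [h4]; ring
    _ ≤ 4 * (((m : ℝ) + 1) ^ 2 * 16 ^ m * ‖p‖ ^ (m ^ 2)) := by
        have h4 : (4:ℝ)^m ≤ 16^m := pow_le_pow_left₀ (by norm_num) (by norm_num) m
        have := mul_nonneg (mul_nonneg (by positivity : (0:ℝ) ≤ ((m:ℝ)+1)^2)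
          (pow_nonneg (by norm_num : (0:ℝ) ≤ 16) m)) (pow_nonneg (norm_nonneg p) (m^2))
        nlinarith [mul_le_mul_of_nonneg_right (mul_le_mul_of_nonneg_left h4
          (by positivity : (0:ℝ) ≤ ((m:ℝ)+1)^2)) (pow_nonneg (norm_nonneg p) (m^2))]

lemma G_summable {p : ℂ} (hp : ‖p‖ < 1) {x : ℂ × ℂ}
    (hx : x ∈ Metric.ball ((1 : ℂ), (1 : ℂ)) (1/2)) :
    Summable (fun m : ℕ => p ^ ((m + 1) ^ 2) * (Spoly (m + 1) x.1 * Spoly (m + 1) x.2)) :=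
  sumMaster (norm_nonneg p) hp (fun m => Gterm_norm_le hp hx m)

lemma G_continuousAt {p : ℂ} (hp : ‖p‖ < 1) : ContinuousAt (Gfun p) ((1 : ℂ), (1 : ℂ)) := by
  have hco : ContinuousOn (Gfun p) (Metric.ball ((1 : ℂ), (1 : ℂ)) (1/2)) := by
    rw [continuousOn_iff_continuous_restrict]
    show Continuous fun x : (Metric.ball ((1:ℂ),(1:ℂ)) (1/2)) =>
      ∑' m : ℕ, p ^ ((m + 1) ^ 2) * (Spoly (m + 1) (x : ℂ × ℂ).1 * Spoly (m + 1) (x : ℂ × ℂ).2)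
    apply continuous_tsum (u := fun m : ℕ => 4 * (((m : ℝ) + 1) ^ 2 * 16 ^ m * ‖p‖ ^ (m ^ 2)))
    · intro m
      apply continuous_const.mul
      apply Continuous.mul
      · apply (Spoly_continuousOn (m+1)).comp_continuous
          (continuous_fst.comp continuous_subtype_val)
        intro x
        have := (ball_facts x.2).1.1
        intro h0
        simp only [Function.comp_apply] at h0
        rw [h0] at this; simp at this; linarith
      · apply (Spoly_continuousOn (m+1)).comp_continuous
          (continuous_snd.comp continuous_subtype_val)
        intro x
        have := (ball_facts x.2).2.1
        intro h0
        simp only [Function.comp_apply] at h0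
        rw [h0] at this; simp at this; linarith
    · exact (sumA (norm_nonneg p) hp (by norm_num : (0:ℝ) ≤ 16)).mul_left 4
    · intro m x
      exact Gterm_norm_le hp x.2 m
  exact hco.continuousAt (Metric.ball_mem_nhds _ (by norm_num))

lemma G_at_one {p : ℂ} : Gfun p ((1 : ℂ), (1 : ℂ))
    = ∑' m : ℕ, p ^ ((m + 1) ^ 2) * ((((m + 1 : ℕ)) : ℂ) * (((m + 1 : ℕ)) : ℂ)) := by
  apply tsum_congr
  intro m
  rw [show (((1:ℂ),(1:ℂ)).1) = (1:ℂ) from rfl, show (((1:ℂ),(1:ℂ)).2) = (1:ℂ) from rfl,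
    Spoly_one]

lemma cast_sq_norm (n : ℕ) : ‖(((n : ℤ)) : ℂ)‖ = (n : ℝ) := by
  push_cast
  simp

lemma nat_bound {P : ℝ} (hP0 : 0 ≤ P) (n : ℕ) :
    (n : ℝ) ^ 2 * P ^ (n ^ 2) ≤ 4 * (((n : ℝ) + 1) ^ 2 * 16 ^ n * P ^ (n ^ 2)) := by
  have h16 : (1:ℝ) ≤ 16 ^ n := one_le_pow₀ (by norm_num)
  have hQ : (0:ℝ) ≤ P ^ (n ^ 2) := pow_nonneg hP0 _
  have hn : (0:ℝ) ≤ (n:ℝ) := Nat.cast_nonneg n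
  nlinarith [mul_nonneg (mul_nonneg (sq_nonneg ((n:ℝ)+1)) (sub_nonneg.2 h16)) hQ,
    mul_nonneg hn hQ, mul_nonneg (mul_nonneg hn hn) hQ]

lemma theta2_sum {p : ℂ} (hp : ‖p‖ < 1) :
    ∑' m : ℤ, (m : ℂ) ^ 2 * p ^ (m ^ 2)
      = 2 * ∑' m : ℕ, p ^ ((m + 1) ^ 2) * ((((m + 1 : ℕ)) : ℂ) * (((m + 1 : ℕ)) : ℂ)) := by
  have SN : Summable (fun n : ℕ => (((n : ℤ)) : ℂ) ^ 2 * p ^ (((n : ℤ)) ^ 2)) := by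
    apply sumMaster (norm_nonneg p) hp
    intro n
    have e1 : (((n : ℤ)) ^ 2) = ((n ^ 2 : ℕ) : ℤ) := by push_cast; ring
    rw [e1, zpow_natCast]
    simp only [norm_mul, norm_pow, cast_sq_norm]
    exact nat_bound (norm_nonneg p) n
  have SM : Summable (fun n : ℕ => ((-((n : ℤ) + 1) : ℤ) : ℂ) ^ 2 * p ^ ((-((n : ℤ) + 1)) ^ 2)) := by
    apply sumMaster (norm_nonneg p) hp
    intro n
    have e1 : ((-((n : ℤ) + 1)) ^ 2) = (((n + 1) ^ 2 : ℕ) : ℤ) := by push_cast; ring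
    rw [e1, zpow_natCast]
    simp only [norm_mul, norm_pow]
    have e2 : ‖((-((n : ℤ) + 1) : ℤ) : ℂ)‖ = ((n : ℝ) + 1) := by
      have h3 : ((-((n : ℤ) + 1) : ℤ) : ℂ) = -(((n + 1 : ℕ)) : ℂ) := by push_cast; ring
      rw [h3, norm_neg, Complex.norm_natCast]
      push_cast; ring
    rw [e2]
    calc ((n:ℝ)+1)^2 * ‖p‖ ^ ((n+1)^2)
        ≤ ((n:ℝ)+1)^2 * ‖p‖ ^ (n^2) :=
          mul_le_mul_of_nonneg_left (powp_le (norm_nonneg p) hp.le n) (by positivity)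
      _ ≤ 4 * (((n : ℝ) + 1) ^ 2 * 16 ^ n * ‖p‖ ^ (n ^ 2)) := by
          have h16 : (1:ℝ) ≤ 16 ^ n := one_le_pow₀ (by norm_num)
          have hQ : (0:ℝ) ≤ ‖p‖ ^ (n ^ 2) := pow_nonneg (norm_nonneg p) _
          nlinarith [mul_nonneg (mul_nonneg (sq_nonneg ((n:ℝ)+1)) (sub_nonneg.2 h16)) hQ]
  have term1 : ∀ n : ℕ, ((((n : ℤ) + 1) : ℂ)) ^ 2 * p ^ (((n : ℤ) + 1) ^ 2)
      = p ^ ((n + 1) ^ 2) * ((((n + 1 : ℕ)) : ℂ) * (((n + 1 : ℕ)) : ℂ)) := by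
    intro n
    have e1 : (((n : ℤ) + 1) ^ 2) = (((n + 1) ^ 2 : ℕ) : ℤ) := by push_cast; ring
    rw [e1, zpow_natCast]
    push_cast
    ring
  rw [tsum_of_nat_of_neg_add_one (f := fun m : ℤ => (m : ℂ) ^ 2 * p ^ (m ^ 2)) SN SM]
  rw [Summable.tsum_eq_zero_add SN]
  simp only [Nat.cast_zero, Int.cast_zero]
  rw [show ((0:ℂ))^2 * p ^ ((0:ℤ)^2) = 0 by norm_num]
  have hA : (∑' n : ℕ, ((((n + 1 : ℕ) : ℤ)) : ℂ) ^ 2 * p ^ ((((n + 1 : ℕ) : ℤ)) ^ 2))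
      = ∑' m : ℕ, p ^ ((m + 1) ^ 2) * ((((m + 1 : ℕ)) : ℂ) * (((m + 1 : ℕ)) : ℂ)) := by
    apply tsum_congr
    intro n
    have := term1 n
    push_cast at this ⊢
    convert this using 3 <;> push_cast <;> ring
  have hB : (∑' n : ℕ, ((-((n : ℤ) + 1) : ℤ) : ℂ) ^ 2 * p ^ ((-((n : ℤ) + 1)) ^ 2))
      = ∑' m : ℕ, p ^ ((m + 1) ^ 2) * ((((m + 1 : ℕ)) : ℂ) * (((m + 1 : ℕ)) : ℂ)) := by
    apply tsum_congr
    intro n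
    have e1 : ((-((n : ℤ) + 1)) ^ 2) = (((n + 1) ^ 2 : ℕ) : ℤ) := by push_cast; ring
    rw [e1, zpow_natCast]
    push_cast
    ring
  rw [zero_add]
  rw [hB]
  rw [show (∑' (n : ℕ), (↑(↑(n + 1) : ℤ) : ℂ) ^ 2 * p ^ ((↑(n + 1) : ℤ) ^ 2)) = ∑' m : ℕ, p ^ ((m + 1) ^ 2) * ((((m + 1 : ℕ)) : ℂ) * (((m + 1 : ℕ)) : ℂ)) from hA]
  ring
/-- The character `f(z,w) = (θ(zw) - θ(zw⁻¹))/(Π(z)Π(w))` of the simple large `N=4`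
superconformal algebra at central charge `-6` tends to `(∑_{m∈ℤ} m² p^(m²)) / (2η⁶)`
as `(z,w) → (1,1)` within the set where `Π(z)Π(w) ≠ 0`. Here `p = u¹²` so `q = p² = u²⁴`. -/
theorem character_limit_at_one (u : ℂ) (hu0 : 0 < ‖u‖) (hu1 : ‖u‖ < 1) :
    Filter.Tendsto
      (fun x : ℂ × ℂ =>
        (jacobiThetaZ (u ^ 12) (x.1 * x.2) - jacobiThetaZ (u ^ 12) (x.1 * x.2⁻¹)) /
          (weylPi u x.1 * weylPi u x.2))
      (nhdsWithin (1, 1) {x : ℂ × ℂ | weylPi u x.1 * weylPi u x.2 ≠ 0})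
      (nhds ((∑' m : ℤ, (m : ℂ) ^ 2 * (u ^ 12) ^ (m ^ 2)) / (2 * dedekindEta u ^ 6))) := by
  have hu : u ≠ 0 := by
    intro h; rw [h] at hu0; simp at hu0
  have hun : ‖u‖ < 1 := hu1
  have hq : ‖u ^ 24‖ < 1 := by
    rw [norm_pow]; exact pow_lt_one₀ (norm_nonneg u) hun (by norm_num)
  have hp : ‖u ^ 12‖ < 1 := by
    rw [norm_pow]; exact pow_lt_one₀ (norm_nonneg u) hun (by norm_num)
  have hr1 : 1 < 2 / (1 + ‖u ^ 24‖) := r_gt_one hq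
  set S : Set (ℂ × ℂ) := {x : ℂ × ℂ | weylPi u x.1 * weylPi u x.2 ≠ 0} with hS
  set Dfun : ℂ × ℂ → ℂ := fun x => u ^ 6 *
      ((qProd (u ^ 24) (x.1 ^ 2) * qProd (u ^ 24) 1 * qProd (u ^ 24) ((x.1 ^ 2)⁻¹)) *
       (qProd (u ^ 24) (x.2 ^ 2) * qProd (u ^ 24) 1 * qProd (u ^ 24) ((x.2 ^ 2)⁻¹)))
    with hDfun
  -- eventual facts in the neighbourhood filter
  have hball : ∀ᶠ x : ℂ × ℂ in nhds (1, 1), x ∈ Metric.ball ((1 : ℂ), (1 : ℂ)) (1/2) := by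
    filter_upwards [Metric.ball_mem_nhds _ (by norm_num : (0:ℝ) < 1/2)] with x hx using hx
  have c1 : ContinuousAt (fun x : ℂ × ℂ => ‖x.1 ^ 2‖) (1, 1) :=
    ((continuous_fst.pow 2).norm).continuousAt
  have c1' : ContinuousAt (fun x : ℂ × ℂ => ‖(x.1 ^ 2)⁻¹‖) (1, 1) :=
    (((continuous_fst.pow 2).continuousAt).inv₀ (by norm_num)).norm
  have c2 : ContinuousAt (fun x : ℂ × ℂ => ‖x.2 ^ 2‖) (1, 1) :=
    ((continuous_snd.pow 2).norm).continuousAt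
  have c2' : ContinuousAt (fun x : ℂ × ℂ => ‖(x.2 ^ 2)⁻¹‖) (1, 1) :=
    (((continuous_snd.pow 2).continuousAt).inv₀ (by norm_num)).norm
  have h2a : ∀ᶠ x : ℂ × ℂ in nhds (1, 1), ‖x.1 ^ 2‖ < 2 / (1 + ‖u ^ 24‖) :=
    c1.eventually_lt_const (by simpa using hr1)
  have h2b : ∀ᶠ x : ℂ × ℂ in nhds (1, 1), ‖(x.1 ^ 2)⁻¹‖ < 2 / (1 + ‖u ^ 24‖) :=
    c1'.eventually_lt_const (by simpa using hr1)
  have h2c : ∀ᶠ x : ℂ × ℂ in nhds (1, 1), ‖x.2 ^ 2‖ < 2 / (1 + ‖u ^ 24‖) :=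
    c2.eventually_lt_const (by simpa using hr1)
  have h2d : ∀ᶠ x : ℂ × ℂ in nhds (1, 1), ‖(x.2 ^ 2)⁻¹‖ < 2 / (1 + ‖u ^ 24‖) :=
    c2'.eventually_lt_const (by simpa using hr1)
  have hSev : ∀ᶠ x : ℂ × ℂ in nhdsWithin (1, 1) S, x ∈ S := by
    filter_upwards [self_mem_nhdsWithin] with x hx using hx
  have hEv := ((((hball.and h2a).and h2b).and h2c).and h2d).filter_mono
    (nhdsWithin_le_nhds (s := S))
  -- the eventual equality
  have E : ∀ᶠ x : ℂ × ℂ in nhdsWithin (1, 1) S,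
      (jacobiThetaZ (u ^ 12) (x.1 * x.2) - jacobiThetaZ (u ^ 12) (x.1 * x.2⁻¹)) /
          (weylPi u x.1 * weylPi u x.2) = Gfun (u ^ 12) x / Dfun x := by
    filter_upwards [hEv, hSev] with x hx hxS
    obtain ⟨⟨⟨⟨hb, ha2⟩, hb2⟩, hc2⟩, hd2⟩ := hx
    obtain ⟨⟨hz1, hz2⟩, ⟨hw1, hw2⟩⟩ := ball_facts hb
    have hz0 : x.1 ≠ 0 := by
      intro h; rw [h] at hz1; simp at hz1; linarith
    have hw0 : x.2 ≠ 0 := by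
      intro h; rw [h] at hw1; simp at hw1; linarith
    have hWz : weylPi u x.1 ≠ 0 := left_ne_zero_of_mul hxS
    have hWw : weylPi u x.2 ≠ 0 := right_ne_zero_of_mul hxS
    rw [weylPi] at hWz hWw
    have hzz : x.1 - x.1⁻¹ ≠ 0 := by
      intro h
      rw [h] at hWz; simp at hWz
    have hww : x.2 - x.2⁻¹ ≠ 0 := by
      intro h
      rw [h] at hWw; simp at hWw
    have hAz := triple_tprod_eq hq ha2.le hb2.le
    have hAw := triple_tprod_eq hq hc2.le hd2.le
    have hqz1 : qProd (u ^ 24) (x.1 ^ 2) ≠ 0 := qProd_ne_zero hq ha2.le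
    have hqz2 : qProd (u ^ 24) ((x.1 ^ 2)⁻¹) ≠ 0 := qProd_ne_zero hq hb2.le
    have hqw1 : qProd (u ^ 24) (x.2 ^ 2) ≠ 0 := qProd_ne_zero hq hc2.le
    have hqw2 : qProd (u ^ 24) ((x.2 ^ 2)⁻¹) ≠ 0 := qProd_ne_zero hq hd2.le
    have hq1 : qProd (u ^ 24) 1 ≠ 0 := qProd_ne_zero hq (by simpa using hr1.le)
    rw [theta_diff hp hz1 hz2 hw1 hw2, weylPi, weylPi, hAz, hAw, hDfun]
    have hG : (∑' m : ℕ, (u ^ 12) ^ ((m + 1) ^ 2) *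
        (Spoly (m + 1) x.1 * Spoly (m + 1) x.2)) = Gfun (u ^ 12) x := rfl
    rw [hG]
    have hA : qProd (u ^ 24) (x.1 ^ 2) * qProd (u ^ 24) 1 * qProd (u ^ 24) ((x.1 ^ 2)⁻¹) ≠ 0 :=
      mul_ne_zero (mul_ne_zero hqz1 hq1) hqz2
    have hB : qProd (u ^ 24) (x.2 ^ 2) * qProd (u ^ 24) 1 * qProd (u ^ 24) ((x.2 ^ 2)⁻¹) ≠ 0 :=
      mul_ne_zero (mul_ne_zero hqw1 hq1) hqw2
    rw [div_eq_div_iff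
      (mul_ne_zero (mul_ne_zero (mul_ne_zero (pow_ne_zero 3 hu) hzz) hA)
        (mul_ne_zero (mul_ne_zero (pow_ne_zero 3 hu) hww) hB))
      (mul_ne_zero (pow_ne_zero 6 hu) (mul_ne_zero hA hB))]
    ring
  -- continuity of the limit function
  have hcD : ContinuousAt Dfun (1, 1) := by
    apply continuousAt_const.mul
    apply ContinuousAt.mul
    · apply ContinuousAt.mul
      · apply ContinuousAt.mul
        · exact (qProd_continuousAt hq (by simpa using hr1)).comp
            ((continuous_fst.pow 2).continuousAt)
        · exact continuousAt_const
      · exact (qProd_continuousAt hq (by simpa using hr1)).comp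
          (((continuous_fst.pow 2).continuousAt).inv₀ (by norm_num))
    · apply ContinuousAt.mul
      · apply ContinuousAt.mul
        · exact (qProd_continuousAt hq (by simpa using hr1)).comp
            ((continuous_snd.pow 2).continuousAt)
        · exact continuousAt_const
      · exact (qProd_continuousAt hq (by simpa using hr1)).comp
          (((continuous_snd.pow 2).continuousAt).inv₀ (by norm_num))
  have hone : ‖(1 : ℂ)‖ ≤ 2 / (1 + ‖u ^ 24‖) := by simpa using hr1.le
  have honesq : ‖((1 : ℂ), (1 : ℂ)).1 ^ 2‖ ≤ 2 / (1 + ‖u ^ 24‖) := by simpa using hr1.le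
  have honesqi : ‖(((1 : ℂ), (1 : ℂ)).1 ^ 2)⁻¹‖ ≤ 2 / (1 + ‖u ^ 24‖) := by simpa using hr1.le
  have hD0 : Dfun (1, 1) ≠ 0 := by
    apply mul_ne_zero (pow_ne_zero 6 hu)
    apply mul_ne_zero <;>
      exact mul_ne_zero (mul_ne_zero (qProd_ne_zero hq (by simpa using hr1.le))
        (qProd_ne_zero hq hone)) (qProd_ne_zero hq (by simpa using hr1.le))
  have hT : Filter.Tendsto (fun x => Gfun (u ^ 12) x / Dfun x) (nhdsWithin (1, 1) S)
      (nhds (Gfun (u ^ 12) (1, 1) / Dfun (1, 1))) :=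
    (((G_continuousAt hp).div hcD hD0).continuousWithinAt :)
  -- identify the limit value
  have hede : dedekindEta u = u * qProd (u ^ 24) 1 := by
    rw [dedekindEta, qProd_one_eq hq]
  have hDval : Dfun (1, 1) = dedekindEta u ^ 6 := by
    rw [hDfun, hede]
    simp only [one_pow, inv_one]
    ring
  have hval : Gfun (u ^ 12) (1, 1) / Dfun (1, 1)
      = (∑' m : ℤ, (m : ℂ) ^ 2 * (u ^ 12) ^ (m ^ 2)) / (2 * dedekindEta u ^ 6) := by
    rw [theta2_sum hp, G_at_one, hDval]
    rw [mul_div_mul_left _ _ (two_ne_zero)]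
  exact Filter.Tendsto.congr' (Filter.EventuallyEq.symm E) (hval ▸ hT)
end qProd2
end

section
/- Fix u ∈ ℂ with 0 < |u| < 1 and set q = u^{24}, p = u^{12}. Define θ(x) = ∑_{m∈ℤ} p^{m²} x^m, Π(z) = u³ (z − z^{-1}) ∏_{n=1}^∞ (1 − z²qⁿ)(1 − qⁿ)(1 − z^{-2}qⁿ), η = u ∏_{n=1}^∞ (1 − qⁿ), and S(z) = u² ∏_{n=1}^∞ (1 − z²qⁿ)(1 − z^{-2}q^{n−1}). Fix w ∈ ℂ ∖ {0} with Π(w) ≠ 0. Then the function z ↦ (θ(zw) − θ(zw^{-1})) · S(z) / (Π(z)Π(w)), defined on {z ∈ ℂ ∖ {0} : Π(z) ≠ 0}, tends to u^{12} · (θ(u^{-12} w) − θ(u^{-12} w^{-1})) / (η · Π(w)) as z → u^{-12} within that set. -/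
open Filter Topology

section Aux

/-- A product with a zero factor has product zero. -/
lemma myHasProd_zero_of_eq_zero {f : ℕ → ℂ} (N : ℕ) (h : f N = 0) : HasProd f 0 := by
  have hev : ∀ᶠ s : Finset ℕ in atTop, (0 : ℂ) = ∏ i ∈ s, f i := by
    filter_upwards [Filter.eventually_ge_atTop ({N} : Finset ℕ)] with s hs
    exact (Finset.prod_eq_zero (by simpa using hs) h).symm
  exact Filter.Tendsto.congr' hev tendsto_const_nhds

/-- The factors `1 - c qⁿ` form a multipliable family when `‖q‖ < 1`. -/
lemma myMultipliable_one_sub (c q : ℂ) (hq : ‖q‖ < 1) :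
    Multipliable (fun n : ℕ => 1 - c * q ^ n) := by
  by_cases hzero : ∃ n : ℕ, 1 - c * q ^ n = 0
  · obtain ⟨N, hN⟩ := hzero
    exact ⟨0, myHasProd_zero_of_eq_zero N hN⟩
  push_neg at hzero
  have hsum : Summable fun n : ℕ => Complex.log (1 - c * q ^ n) := by
    have hgeo : Summable fun n : ℕ => (3/2 : ℝ) * (‖c‖ * ‖q‖ ^ n) :=
      ((summable_geometric_of_lt_one (norm_nonneg q) hq).mul_left ‖c‖).mul_left _
    refine Summable.of_norm_bounded_eventually hgeo ?_
    have hten : Tendsto (fun n : ℕ => ‖c‖ * ‖q‖ ^ n) atTop (𝓝 0) := by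
      simpa using (tendsto_pow_atTop_nhds_zero_of_lt_one (norm_nonneg q) hq).const_mul ‖c‖
    have hev : ∀ᶠ n in atTop, ‖c‖ * ‖q‖ ^ n ≤ 1/2 :=
      hten.eventually (eventually_le_nhds (by norm_num))
    rw [Nat.cofinite_eq_atTop]
    filter_upwards [hev] with n hn
    have h1 : ‖-(c * q ^ n)‖ ≤ 1/2 := by
      rw [norm_neg, norm_mul, norm_pow]; exact hn
    have h2 := Complex.norm_log_one_add_half_le_self h1
    rw [show (1 : ℂ) + -(c * q ^ n) = 1 - c * q ^ n by ring] at h2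
    calc ‖Complex.log (1 - c * q ^ n)‖ ≤ 3/2 * ‖-(c * q ^ n)‖ := h2
    _ = 3/2 * (‖c‖ * ‖q‖ ^ n) := by rw [norm_neg, norm_mul, norm_pow]
  exact Complex.multipliable_of_summable_log hsum

lemma myMultipliable_one_sub' (c q : ℂ) (hq : ‖q‖ < 1) :
    Multipliable (fun n : ℕ => 1 - c * q ^ (n + 1)) :=
  (myMultipliable_one_sub (c * q) q hq).congr (fun n => by ring_nf)

/-- The key algebraic identity `Π(z) = z η S(z)`. -/
lemma myWeylPi_eq (u z : ℂ) (hu : ‖u‖ < 1) (hz : z ≠ 0) :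
    weylPi u z = z * dedekindEta u * ghostSch u z := by
  have hq : ‖u ^ 24‖ < 1 := by
    rw [norm_pow]; exact pow_lt_one₀ (norm_nonneg u) hu (by norm_num)
  set q : ℂ := u ^ 24 with hqdef
  have hA : Multipliable (fun n : ℕ => 1 - z ^ 2 * q ^ (n + 1)) := myMultipliable_one_sub' _ _ hq
  have hB : Multipliable (fun n : ℕ => 1 - q ^ (n + 1)) :=
    (myMultipliable_one_sub' 1 q hq).congr (fun n => by ring_nf)
  have hC : Multipliable (fun n : ℕ => 1 - (z ^ 2)⁻¹ * q ^ (n + 1)) :=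
    myMultipliable_one_sub' _ _ hq
  have hD : Multipliable (fun n : ℕ => 1 - (z ^ 2)⁻¹ * q ^ n) := myMultipliable_one_sub _ _ hq
  have hsplit : (∏' n : ℕ, ((1 - z ^ 2 * q ^ (n + 1)) * (1 - q ^ (n + 1)) *
      (1 - (z ^ 2)⁻¹ * q ^ (n + 1))))
      = (∏' n : ℕ, (1 - z ^ 2 * q ^ (n + 1))) * (∏' n : ℕ, (1 - q ^ (n + 1))) *
        (∏' n : ℕ, (1 - (z ^ 2)⁻¹ * q ^ (n + 1))) := by
    rw [Multipliable.tprod_mul (hA.mul hB) hC, Multipliable.tprod_mul hA hB]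
  have hS : (∏' n : ℕ, ((1 - z ^ 2 * q ^ (n + 1)) * (1 - (z ^ 2)⁻¹ * q ^ n)))
      = (∏' n : ℕ, (1 - z ^ 2 * q ^ (n + 1))) *
        ((1 - (z ^ 2)⁻¹) * ∏' n : ℕ, (1 - (z ^ 2)⁻¹ * q ^ (n + 1))) := by
    rw [Multipliable.tprod_mul hA hD, tprod_eq_zero_mul' (f := fun n : ℕ => 1 - (z ^ 2)⁻¹ * q ^ n) hC]
    norm_num
  have hzz : z - z⁻¹ = z * (1 - (z ^ 2)⁻¹) := by
    field_simp
  rw [weylPi, dedekindEta, ghostSch, ← hqdef, hsplit, hS, hzz]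
  ring

lemma mySummable_bound (r M : ℝ) (hr0 : 0 ≤ r) (hr : r < 1) (hM : 0 < M) :
    Summable (fun n : ℕ => r ^ (n ^ 2) * M ^ n) := by
  rcases eq_or_lt_of_le hr0 with h0 | h0
  · apply Summable.of_norm_bounded_eventually_nat (g := fun n => (0:ℝ)) summable_zero
    filter_upwards [eventually_ge_atTop 1] with n hn
    have : n ^ 2 ≠ 0 := by positivity
    rw [← h0, zero_pow this, zero_mul, norm_zero]
  apply summable_of_ratio_norm_eventually_le (r := 1/2) (by norm_num)
  have hr2 : r ^ 2 < 1 := by nlinarith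
  have hten : Tendsto (fun n : ℕ => r * (r ^ 2) ^ n * M) atTop (𝓝 0) := by
    have := (tendsto_pow_atTop_nhds_zero_of_lt_one (by positivity) hr2).const_mul r
    simpa using this.mul_const M
  have hev : ∀ᶠ n in atTop, r * (r ^ 2) ^ n * M ≤ 1/2 :=
    hten.eventually (eventually_le_nhds (by norm_num))
  filter_upwards [hev] with n hn
  have hkey : r ^ ((n + 1) ^ 2) * M ^ (n + 1)
      = (r ^ (n ^ 2) * M ^ n) * (r * (r ^ 2) ^ n * M) := by
    rw [show (n + 1) ^ 2 = n ^ 2 + (2 * n + 1) by ring, pow_add, pow_succ, ← pow_mul]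
    ring
  rw [Real.norm_of_nonneg (by positivity), Real.norm_of_nonneg (by positivity), hkey]
  calc (r ^ (n ^ 2) * M ^ n) * (r * (r ^ 2) ^ n * M)
      ≤ (r ^ (n ^ 2) * M ^ n) * (1/2) := by
        apply mul_le_mul_of_nonneg_left hn (by positivity)
    _ = 1/2 * (r ^ (n ^ 2) * M ^ n) := by ring

/-- Continuity of the theta series in the parameter `z`, at a nonzero point. -/
lemma myTheta_tendsto (p v z₀ : ℂ) {S : Set ℂ} (hp : ‖p‖ < 1) (hv : v ≠ 0) (hz₀ : z₀ ≠ 0) :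
    Tendsto (fun z => jacobiThetaZ p (z * v)) (nhdsWithin z₀ S)
      (𝓝 (jacobiThetaZ p (z₀ * v))) := by
  apply Filter.Tendsto.mono_left _ nhdsWithin_le_nhds
  have hz0 : 0 < ‖z₀‖ := norm_pos_iff.mpr hz₀
  have hv0 : 0 < ‖v‖ := norm_pos_iff.mpr hv
  set M : ℝ := max (2 * ‖z₀‖ * ‖v‖) ((‖z₀‖ * ‖v‖ / 2)⁻¹) with hMdef
  have hM0 : 0 < M := lt_max_of_lt_left (by positivity)
  simp only [jacobiThetaZ]
  apply tendsto_tsum_of_dominated_convergence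
    (bound := fun m : ℤ => ‖p‖ ^ (m.natAbs ^ 2) * M ^ m.natAbs)
  · apply Summable.of_nat_of_neg
    · exact (mySummable_bound ‖p‖ M (norm_nonneg p) hp hM0).congr (fun n => by simp)
    · exact (mySummable_bound ‖p‖ M (norm_nonneg p) hp hM0).congr (fun n => by simp)
  · intro m
    refine tendsto_const_nhds.mul ?_
    exact Filter.Tendsto.comp
      (continuousAt_zpow₀ (z₀ * v) m (Or.inl (mul_ne_zero hz₀ hv)))
      ((continuous_id.mul continuous_const).tendsto z₀)
  · filter_upwards [Metric.ball_mem_nhds z₀ (half_pos hz0)] with z hz m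
    rw [Metric.mem_ball, dist_eq_norm] at hz
    have hzl : ‖z₀‖ / 2 ≤ ‖z‖ := by
      have := norm_sub_norm_le z₀ z
      rw [show z₀ - z = -(z - z₀) by ring, norm_neg] at this
      linarith
    have hzu : ‖z‖ ≤ 2 * ‖z₀‖ := by
      have h1 : ‖z‖ ≤ ‖z₀‖ + ‖z - z₀‖ := by
        calc ‖z‖ = ‖z₀ + (z - z₀)‖ := by ring_nf
          _ ≤ ‖z₀‖ + ‖z - z₀‖ := norm_add_le _ _
      linarith
    have hzv_l : ‖z₀‖ * ‖v‖ / 2 ≤ ‖z * v‖ := by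
      rw [norm_mul]
      calc ‖z₀‖ * ‖v‖ / 2 = ‖z₀‖ / 2 * ‖v‖ := by ring
        _ ≤ ‖z‖ * ‖v‖ := by apply mul_le_mul_of_nonneg_right hzl (norm_nonneg v)
    have hzv_u : ‖z * v‖ ≤ 2 * ‖z₀‖ * ‖v‖ := by
      rw [norm_mul]
      exact mul_le_mul_of_nonneg_right hzu (norm_nonneg v)
    have hzv0 : 0 < ‖z * v‖ := lt_of_lt_of_le (by positivity) hzv_l
    rw [norm_mul, norm_zpow, norm_zpow]
    have hp_eq : ‖p‖ ^ (m ^ 2 : ℤ) = ‖p‖ ^ (m.natAbs ^ 2) := by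
      rw [show (m ^ 2 : ℤ) = ((m.natAbs ^ 2 : ℕ) : ℤ) by
        rw [← Int.natAbs_pow]; exact (Int.natAbs_of_nonneg (sq_nonneg m)).symm]
      exact zpow_natCast _ _
    rw [hp_eq]
    apply mul_le_mul_of_nonneg_left _ (by positivity)
    rcases Int.natAbs_eq m with h | h
    · rw [h, zpow_natCast]
      simp only [Int.natAbs_neg, Int.natAbs_natCast]
      exact pow_le_pow_left₀ (norm_nonneg _) (le_trans hzv_u (le_max_left _ _)) _
    · rw [h, zpow_neg, zpow_natCast, ← inv_pow]
      simp only [Int.natAbs_neg, Int.natAbs_natCast]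
      refine pow_le_pow_left₀ (by positivity) ?_ _
      exact le_trans (inv_anti₀ (by positivity) hzv_l) (le_max_right _ _)

end Aux

/-- Fix `w ≠ 0` with `Π(w) ≠ 0`. Then `(θ(zw) - θ(zw⁻¹)) S(z) / (Π(z)Π(w))` tends to
`u¹² (θ(u⁻¹²w) - θ(u⁻¹²w⁻¹)) / (η Π(w))` as `z → u⁻¹² = q^(-1/2)` within
`{z ≠ 0 : Π(z) ≠ 0}`. This computes the character of the quantum Hamiltonian reduction
on one affine `sl₂` factor, matching the character of `V_{k₂}(osp(1|2))`. -/
theorem character_limit_one_reduction (u w : ℂ)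
    (hu0 : 0 < ‖u‖) (hu1 : ‖u‖ < 1)
    (hw : w ≠ 0) (hPw : weylPi u w ≠ 0) :
    Filter.Tendsto
      (fun z : ℂ =>
        (jacobiThetaZ (u ^ 12) (z * w) - jacobiThetaZ (u ^ 12) (z * w⁻¹)) * ghostSch u z /
          (weylPi u z * weylPi u w))
      (nhdsWithin ((u ^ 12)⁻¹) {z : ℂ | z ≠ 0 ∧ weylPi u z ≠ 0})
      (nhds (u ^ 12 *
          (jacobiThetaZ (u ^ 12) ((u ^ 12)⁻¹ * w) - jacobiThetaZ (u ^ 12) ((u ^ 12)⁻¹ * w⁻¹)) /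
        (dedekindEta u * weylPi u w))) := by
  have hnorm : ‖u‖ < 1 := by exact hu1
  have hu : u ≠ 0 := by
    intro h
    rw [h] at hu0
    simp at hu0
  have hp0 : (u : ℂ) ^ 12 ≠ 0 := pow_ne_zero _ hu
  have hpn : ‖u ^ 12‖ < 1 := by
    rw [norm_pow]; exact pow_lt_one₀ (norm_nonneg u) hnorm (by norm_num)
  have hz₀ : ((u : ℂ) ^ 12)⁻¹ ≠ 0 := inv_ne_zero hp0
  have hη : dedekindEta u ≠ 0 := by
    intro h
    apply hPw
    rw [myWeylPi_eq u w hnorm hw, h]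
    ring
  -- the simplified function and its limit
  have hθw : Tendsto (fun z => jacobiThetaZ (u ^ 12) (z * w))
      (nhdsWithin ((u ^ 12)⁻¹) {z : ℂ | z ≠ 0 ∧ weylPi u z ≠ 0})
      (𝓝 (jacobiThetaZ (u ^ 12) ((u ^ 12)⁻¹ * w))) :=
    myTheta_tendsto _ _ _ hpn hw hz₀
  have hθw' : Tendsto (fun z => jacobiThetaZ (u ^ 12) (z * w⁻¹))
      (nhdsWithin ((u ^ 12)⁻¹) {z : ℂ | z ≠ 0 ∧ weylPi u z ≠ 0})
      (𝓝 (jacobiThetaZ (u ^ 12) ((u ^ 12)⁻¹ * w⁻¹))) :=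
    myTheta_tendsto _ _ _ hpn (inv_ne_zero hw) hz₀
  have hden : Tendsto (fun z : ℂ => z * dedekindEta u * weylPi u w)
      (nhdsWithin ((u ^ 12)⁻¹) {z : ℂ | z ≠ 0 ∧ weylPi u z ≠ 0})
      (𝓝 ((u ^ 12)⁻¹ * dedekindEta u * weylPi u w)) :=
    Filter.Tendsto.mono_left
      (((continuous_id.mul continuous_const).mul continuous_const).tendsto _)
      nhdsWithin_le_nhds
  have hden0 : ((u : ℂ) ^ 12)⁻¹ * dedekindEta u * weylPi u w ≠ 0 :=
    mul_ne_zero (mul_ne_zero hz₀ hη) hPw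
  have hmain := ((hθw.sub hθw').div hden hden0)
  have hval : (jacobiThetaZ (u ^ 12) ((u ^ 12)⁻¹ * w) -
        jacobiThetaZ (u ^ 12) ((u ^ 12)⁻¹ * w⁻¹)) /
        ((u ^ 12)⁻¹ * dedekindEta u * weylPi u w)
      = u ^ 12 *
          (jacobiThetaZ (u ^ 12) ((u ^ 12)⁻¹ * w) - jacobiThetaZ (u ^ 12) ((u ^ 12)⁻¹ * w⁻¹)) /
        (dedekindEta u * weylPi u w) := by
    field_simp
  rw [hval] at hmain
  refine Filter.Tendsto.congr' ?_ hmain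
  apply Filter.eventuallyEq_of_mem self_mem_nhdsWithin
  rintro z ⟨hz, hPz⟩
  have hid := myWeylPi_eq u z hnorm hz
  have hSz : ghostSch u z ≠ 0 := by
    intro h
    apply hPz
    rw [hid, h, mul_zero]
  simp only [Pi.div_apply]
  rw [hid]
  field_simp
end
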